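/- For fixed ê > 0 and any real a, the function S(e) := ∫_{ê}^{∞} (exp(-(x - a·e)²/2) + exp(-(x + a·e)²/2)) dx, defined for e ≥ 0, is non-decreasing in e. -/
import Mathlib


open MeasureTheory Real

noncomputable def gauss (x : ℝ) : ℝ := Real.exp (-x ^ 2 / 2)

lemma gauss_cont : Continuous gauss := by
  unfold gauss; continuity

lemma gauss_int : Integrable gauss := by
  have h := integrable_exp_neg_mul_sq (by norm_num : (0:ℝ) < 1/2)
  have : gauss = fun x : ℝ => Real.exp (-(1/2) * x ^ 2) := by
    funext x; unfold gauss; congr 1; ring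
  rw [this]; exact h

lemma gauss_even (x : ℝ) : gauss (-x) = gauss x := by
  unfold gauss; ring_nf

lemma shift_int (t c : ℝ) :
    (∫ x in Set.Ici t, gauss (x + c)) = ∫ x in Set.Ici (t + c), gauss x := by
  rw [← integral_indicator measurableSet_Ici, ← integral_indicator measurableSet_Ici]
  have : (Set.Ici t).indicator (fun x => gauss (x + c)) =
      fun x => (Set.Ici (t + c)).indicator gauss (x + c) := by
    funext x
    simp only [Set.indicator_apply, Set.mem_Ici]
    by_cases h : t ≤ x
    · rw [if_pos h, if_pos (by linarith)]
    · rw [if_neg h, if_neg (by intro h'; exact h (by linarith))]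
  rw [this]
  exact integral_add_right_eq_self ((Set.Ici (t + c)).indicator gauss) c

-- g(t) = ∫_{t}^∞ gauss
noncomputable def G (t : ℝ) : ℝ := ∫ x in Set.Ici t, gauss x

lemma G_split {s t : ℝ} (h : s ≤ t) :
    G s = (∫ x in Set.Ico s t, gauss x) + G t := by
  unfold G
  have hdisj : Disjoint (Set.Ico s t) (Set.Ici t) := by
    rw [Set.disjoint_left]
    rintro x ⟨_, h2⟩ h3
    exact absurd h3 (not_le.mpr h2)
  rw [← setIntegral_union hdisj measurableSet_Ici
      (gauss_int.integrableOn) (gauss_int.integrableOn), Set.Ico_union_Ici_eq_Ici h]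

lemma Ico_eq_interval {s t : ℝ} (h : s ≤ t) :
    (∫ x in Set.Ico s t, gauss x) = ∫ x in s..t, gauss x := by
  rw [intervalIntegral.integral_of_le h, integral_Ico_eq_integral_Ioo, integral_Ioc_eq_integral_Ioo]

lemma key (ehat : ℝ) (hehat : 0 < ehat) {b b' : ℝ} (hb : 0 ≤ b) (hbb : b ≤ b') :
    G (ehat - b) + G (ehat + b) ≤ G (ehat - b') + G (ehat + b') := by
  have h1 : ehat - b' ≤ ehat - b := by linarith
  have h2 : ehat + b ≤ ehat + b' := by linarith
  rw [G_split h1, G_split h2]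
  have hkey : (∫ x in Set.Ico (ehat + b) (ehat + b'), gauss x)
      ≤ ∫ x in Set.Ico (ehat - b') (ehat - b), gauss x := by
    rw [Ico_eq_interval h2, Ico_eq_interval h1]
    -- RHS: substitute x ↦ -x, using evenness
    have hR : (∫ x in (ehat - b')..(ehat - b), gauss x)
        = ∫ x in (b - ehat)..(b' - ehat), gauss x := by
      have h := intervalIntegral.integral_comp_neg (a := b - ehat) (b := b' - ehat) gauss
      simp_rw [gauss_even] at h
      rw [h]
      congr 1 <;> ring
    have hL : (∫ x in (ehat + b)..(ehat + b'), gauss x)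
        = ∫ x in (b - ehat)..(b' - ehat), (fun x => gauss (x + 2 * ehat)) x := by
      rw [intervalIntegral.integral_comp_add_right gauss (2 * ehat)]
      congr 1 <;> ring
    rw [hR, hL]
    apply intervalIntegral.integral_mono_on (by linarith)
    · exact ((gauss_cont.comp (by continuity)).intervalIntegrable _ _)
    · exact (gauss_cont.intervalIntegrable _ _)
    · intro x hx
      have hx1 : b - ehat ≤ x := hx.1
      unfold gauss
      apply Real.exp_le_exp.mpr
      have : x ^ 2 ≤ (x + 2 * ehat) ^ 2 := by nlinarith
      linarith
  linarith

theorem stmt_2 (ehat a : ℝ) (hehat : 0 < ehat) :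
    ∀ e e' : ℝ, 0 ≤ e → e ≤ e' →
      (∫ x in Set.Ici ehat,
          (Real.exp (-(x - a * e) ^ 2 / 2) + Real.exp (-(x + a * e) ^ 2 / 2))) ≤
        ∫ x in Set.Ici ehat,
          (Real.exp (-(x - a * e') ^ 2 / 2) + Real.exp (-(x + a * e') ^ 2 / 2)) := by
  intro e e' he hee
  have hsplit : ∀ c : ℝ,
      (∫ x in Set.Ici ehat,
          (Real.exp (-(x - c) ^ 2 / 2) + Real.exp (-(x + c) ^ 2 / 2)))
        = G (ehat - c) + G (ehat + c) := by
    intro c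
    have h1 : IntegrableOn (fun x => gauss (x + -c)) (Set.Ici ehat) := by
      exact (gauss_int.comp_add_right (-c)).integrableOn
    have h2 : IntegrableOn (fun x => gauss (x + c)) (Set.Ici ehat) := by
      exact (gauss_int.comp_add_right c).integrableOn
    have : (∫ x in Set.Ici ehat,
          (Real.exp (-(x - c) ^ 2 / 2) + Real.exp (-(x + c) ^ 2 / 2)))
        = (∫ x in Set.Ici ehat, gauss (x + -c)) + ∫ x in Set.Ici ehat, gauss (x + c) := by
      rw [← integral_add h1 h2]
      apply setIntegral_congr_fun measurableSet_Ici
      intro x _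
      simp only [gauss]
      ring_nf
    rw [this, shift_int, shift_int]
    unfold G
    congr 2 <;> ring
  rw [hsplit (a * e), hsplit (a * e')]
  rcases le_or_gt 0 a with ha | ha
  · exact key ehat hehat (by positivity) (by nlinarith)
  · have hk := key ehat hehat (b := -a * e) (b' := -a * e') (by nlinarith) (by nlinarith)
    have r1 : ehat - -a * e = ehat + a * e := by ring
    have r2 : ehat + -a * e = ehat - a * e := by ring
    have r3 : ehat - -a * e' = ehat + a * e' := by ring
    have r4 : ehat + -a * e' = ehat - a * e' := by ring
    rw [r1, r2, r3, r4] at hk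
    linarith
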